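/- Let G be a matching-covered graph, C a separating cut with cut-contractions G₁, G₂, and let B₁, B₂ be sets of incidence vectors of perfect matchings of G₁, G₂ forming bases of lin(P(G₁)) and lin(P(G₂)) respectively. Then the merger B₁ ⊙ B₂ (composing, for each edge e ∈ C, one fixed matching of B₁ through e with all matchings of B₂ through e, and all remaining matchings of B₁ through e with one fixed matching of B₂ through e) has size |B₁| + |B₂| − |C|, consists of incidence vectors of perfect matchings of G meeting C exactly once, and is a basis of lin(P(G;C)). Moreover, if B₁, B₂ are integral bases of their spans, then so is B₁ ⊙ B₂; and if B₁, B₂ are lattice bases of L(G₁), L(G₂), then B₁ ⊙ B₂ is a lattice basis of the lattice generated by P(G;C) ∩ {0,1}^E. -/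

import Mathlib

open Classical Finset

set_option linter.unusedSectionVars false
set_option maxHeartbeats 1000000

noncomputable section

namespace PaperPM

variable {V : Type} [Fintype V] [DecidableEq V]

/-- `M` is (the edge set of) a perfect matching of `G`. -/
def IsPM (G : SimpleGraph V) (M : Finset (Sym2 V)) : Prop :=
  (M : Set (Sym2 V)) ⊆ G.edgeSet ∧ ∀ v : V, ∃! e, e ∈ M ∧ v ∈ e

/-- `G` is matching-covered: every edge lies in a perfect matching. -/
def MatchingCovered (G : SimpleGraph V) : Prop :=
  ∀ e ∈ G.edgeSet, ∃ M, IsPM G M ∧ e ∈ M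

/-- incidence (indicator) vector of a set of edges -/
def indVec (M : Finset (Sym2 V)) : Sym2 V → ℝ := fun e => if e ∈ M then 1 else 0

/-- the perfect matching polytope of `G` -/
def pmPolytope (G : SimpleGraph V) : Set (Sym2 V → ℝ) :=
  convexHull ℝ {x | ∃ M, IsPM G M ∧ x = indVec M}

/-- the cut `δ(X)`: edges of `G` with exactly one endpoint in `X` -/
def cutE (G : SimpleGraph V) (X : Set V) : Finset (Sym2 V) :=
  Finset.univ.filter fun e =>
    e ∈ G.edgeSet ∧ ∃ u v : V, e = s(u, v) ∧ u ∈ X ∧ v ∉ X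

/-- `x(A) = Σ_{a ∈ A} x_a` -/
def edgeSum (x : Sym2 V → ℝ) (A : Finset (Sym2 V)) : ℝ := ∑ e ∈ A, x e

/-- the face `P(G;C) = P(G) ∩ {x : x(δ(X)) = 1}` -/
def faceCut (G : SimpleGraph V) (X : Set V) : Set (Sym2 V → ℝ) :=
  {x ∈ pmPolytope G | edgeSum x (cutE G X) = 1}

/-- `δ(X)` is a tight cut -/
def TightCut (G : SimpleGraph V) (X : Set V) : Prop :=
  Odd X.toFinset.card ∧ 1 < X.toFinset.card ∧ X.toFinset.card < Fintype.card V - 1 ∧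
    ∀ M, IsPM G M → (M ∩ cutE G X).card = 1

/-- a brick: non-bipartite matching-covered graph without tight cuts -/
def IsBrick (G : SimpleGraph V) : Prop :=
  MatchingCovered G ∧ ¬ G.Colorable 2 ∧ ∀ X : Set V, ¬ TightCut G X

/-- dimension of a subset of `ℝ^{Sym2 V}` (affine dimension; `-1` for the empty set) -/
def polyDim (s : Set (Sym2 V → ℝ)) : ℤ :=
  if s = ∅ then -1 else (Module.finrank ℝ (vectorSpan ℝ s) : ℤ)

/-- number of bricks in a tight cut decomposition of `G`, via the dimension
formula `dim P(G) = |E| − |V| + 1 − b(G)` of Naddef and Edmonds–Pulleyblank–Lovász. -/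
def brickCount (G : SimpleGraph V) : ℤ :=
  (G.edgeFinset.card : ℤ) - Fintype.card V + 1 - polyDim (pmPolytope G)

/-- (the edge set of) a perfect matching of the contraction `G/X`, viewed inside `G`:
no edge inside `X`, exactly one cut edge (covering the contraction vertex), and every
vertex outside `X` covered exactly once. This keeps multiple parallel cut edges distinct. -/
def IsPMContr (G : SimpleGraph V) (X : Set V) (M : Finset (Sym2 V)) : Prop :=
  (M : Set (Sym2 V)) ⊆ G.edgeSet ∧ (∀ e ∈ M, ¬ ∀ v ∈ e, v ∈ X) ∧
    (M ∩ cutE G X).card = 1 ∧ ∀ v : V, v ∉ X → ∃! e, e ∈ M ∧ v ∈ e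

/-- the contraction `G/X` is matching-covered (every one of its edges, i.e. every
edge of `G` not inside `X`, lies in a perfect matching of `G/X`). -/
def MatchingCoveredContr (G : SimpleGraph V) (X : Set V) : Prop :=
  ∀ e ∈ G.edgeSet, (¬ ∀ v ∈ e, v ∈ X) → ∃ M, IsPMContr G X M ∧ e ∈ M

/-- `δ(X)` is a separating cut: odd, nontrivial, and both cut-contractions
`G/X` and `G/X̄` are matching-covered. -/
def SeparatingCut (G : SimpleGraph V) (X : Set V) : Prop :=
  Odd X.toFinset.card ∧ 1 < X.toFinset.card ∧ X.toFinset.card < Fintype.card V - 1 ∧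
    MatchingCoveredContr G X ∧ MatchingCoveredContr G Xᶜ

/-- the edges of the contraction `G/X`, as edges of `G` -/
def contrEdges (G : SimpleGraph V) (X : Set V) : Finset (Sym2 V) :=
  G.edgeFinset.filter fun e => ¬ ∀ v ∈ e, v ∈ X

/-- the perfect matching polytope of the contraction `G/X`, in the coordinates of `G` -/
def contrPolytope (G : SimpleGraph V) (X : Set V) : Set (Sym2 V → ℝ) :=
  convexHull ℝ {x | ∃ M, IsPMContr G X M ∧ x = indVec M}

/-- number of bricks of the contraction `G/X`, via the dimension formula -/
def brickCountContr (G : SimpleGraph V) (X : Set V) : ℤ :=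
  (contrEdges G X).card - ((Fintype.card V - X.toFinset.card : ℕ) + 1) + 1 -
    polyDim (contrPolytope G X)

/-- the contraction `G/X` is a Birkhoff–von Neumann graph: its perfect matching
polytope is cut out by nonnegativity, the degree equations, and `x(δ(X)) = 1`. -/
def BvNContr (G : SimpleGraph V) (X : Set V) : Prop :=
  contrPolytope G X =
    {x | (∀ e, 0 ≤ x e) ∧ (∀ e : Sym2 V, (e ∉ G.edgeSet ∨ ∀ v ∈ e, v ∈ X) → x e = 0) ∧
      (∀ v : V, v ∉ X → edgeSum x (cutE G {v}) = 1) ∧ edgeSum x (cutE G X) = 1}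

/-- the contraction `G/X` is bipartite -/
def ContrBipartite (G : SimpleGraph V) (X : Set V) : Prop :=
  ∃ (c : V → Bool) (b : Bool), ∀ u v : V, G.Adj u v → (u ∉ X ∨ v ∉ X) →
    (if u ∈ X then b else c u) ≠ (if v ∈ X then b else c v)

/-- `G` is a Birkhoff–von Neumann graph -/
def BvN (G : SimpleGraph V) : Prop :=
  pmPolytope G =
    {x | (∀ e, 0 ≤ x e) ∧ (∀ e : Sym2 V, e ∉ G.edgeSet → x e = 0) ∧
      ∀ v : V, edgeSum x (cutE G {v}) = 1}

/-- `F` is a face of the convex set `P` -/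
def IsFaceOf {E : Type*} [AddCommGroup E] [Module ℝ E] (P F : Set E) : Prop :=
  F ⊆ P ∧ Convex ℝ F ∧ ∀ x ∈ P, ∀ y ∈ P, ∀ t : ℝ, 0 < t → t < 1 →
    t • x + (1 - t) • y ∈ F → x ∈ F ∧ y ∈ F

/-- a vector is integral if all its coordinates are integers -/
def Integral (x : Sym2 V → ℝ) : Prop := ∀ e, ∃ n : ℤ, x e = (n : ℝ)

/-- the Petersen graph, as the Kneser graph `K(5,2)` -/
def petersenGraph : SimpleGraph {s : Finset (Fin 5) // s.card = 2} where
  Adj a b := Disjoint (a : Finset (Fin 5)) (b : Finset (Fin 5))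
  symm := ⟨fun _ _ h => h.symm⟩
  loopless := ⟨fun a h => by
    have h0 : (a : Finset (Fin 5)) = ∅ := by
      exact disjoint_self.mp h
    have h2 := a.2
    rw [h0] at h2
    simp at h2⟩


/-- the merger `B₁ ⊙ B₂` of two families of matchings along the cut `C`: for each
`e ∈ C`, the fixed matching `m₁ e ∈ B₁` through `e` is composed with every matching
of `B₂` through `e`, and every other matching of `B₁` through `e` is composed with
the fixed matching `m₂ e ∈ B₂`. -/
def merger (B₁ B₂ : Finset (Finset (Sym2 V))) (m₁ m₂ : Sym2 V → Finset (Sym2 V))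
    (C : Finset (Sym2 V)) : Finset (Finset (Sym2 V)) :=
  C.biUnion fun e =>
    ((B₂.filter fun N => e ∈ N).image fun N => m₁ e ∪ N) ∪
      ((B₁.filter fun N => e ∈ N ∧ N ≠ m₁ e).image fun N => N ∪ m₂ e)



section Aux18

variable {V : Type} [Fintype V] [DecidableEq V]

/-- all vertices of an edge lie in `Y` -/
def allIn (Y : Set V) (e : Sym2 V) : Prop := ∀ v ∈ e, v ∈ Y

lemma indVec_injective : Function.Injective (indVec (V := V)) := by
  intro M N h
  ext e
  have h2 := congrFun h e
  by_cases hM : e ∈ M <;> by_cases hN : e ∈ N <;> simp_all [indVec]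

lemma mem_cutE {G : SimpleGraph V} {X : Set V} {e : Sym2 V} :
    e ∈ cutE G X ↔ e ∈ G.edgeSet ∧ ∃ u v : V, e = s(u, v) ∧ u ∈ X ∧ v ∉ X := by
  simp [cutE]

lemma cutE_compl {G : SimpleGraph V} {X : Set V} : cutE G Xᶜ = cutE G X := by
  ext e
  simp only [mem_cutE, Set.mem_compl_iff, not_not]
  constructor
  · rintro ⟨he, u, v, rfl, hu, hv⟩
    exact ⟨he, v, u, Sym2.eq_swap, hv, hu⟩
  · rintro ⟨he, u, v, rfl, hu, hv⟩
    exact ⟨he, v, u, Sym2.eq_swap, hv, hu⟩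

lemma not_allIn_compl {Y : Set V} {e : Sym2 V} (h1 : allIn Y e) (h2 : allIn Yᶜ e) : False :=
  h2 _ (Sym2.out_fst_mem e) (h1 _ (Sym2.out_fst_mem e))

lemma edge_cases {G : SimpleGraph V} {X : Set V} {e : Sym2 V} (he : e ∈ G.edgeSet) :
    e ∈ cutE G X ∨ allIn X e ∨ allIn Xᶜ e := by
  induction e with
  | _ u v =>
    by_cases hu : u ∈ X <;> by_cases hv : v ∈ X
    · refine Or.inr (Or.inl ?_)
      intro w hw
      rcases Sym2.mem_iff.mp hw with rfl | rfl <;> assumption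
    · exact Or.inl (mem_cutE.mpr ⟨he, u, v, rfl, hu, hv⟩)
    · exact Or.inl (mem_cutE.mpr ⟨he, v, u, Sym2.eq_swap, hv, hu⟩)
    · refine Or.inr (Or.inr ?_)
      intro w hw
      rcases Sym2.mem_iff.mp hw with rfl | rfl <;> assumption

lemma cut_not_allIn {G : SimpleGraph V} {X : Set V} {e : Sym2 V} (he : e ∈ cutE G X) :
    ¬ allIn X e ∧ ¬ allIn Xᶜ e := by
  obtain ⟨-, u, v, rfl, hu, hv⟩ := mem_cutE.mp he
  constructor
  · intro h
    exact hv (h v (Sym2.mem_mk_right u v))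
  · intro h
    exact h u (Sym2.mem_mk_left u v) hu

lemma inter_eq_singleton {α : Type*} [DecidableEq α] {M C : Finset α} {e : α}
    (he : e ∈ M) (heC : e ∈ C) (h : (M ∩ C).card = 1) : M ∩ C = {e} := by
  obtain ⟨a, ha⟩ := Finset.card_eq_one.mp h
  have he' : e ∈ M ∩ C := Finset.mem_inter.mpr ⟨he, heC⟩
  rw [ha] at he' ⊢
  rw [Finset.mem_singleton] at he'
  rw [he']

lemma contr_cutcard₁ {G : SimpleGraph V} {X : Set V} {M : Finset (Sym2 V)}
    (h : IsPMContr G Xᶜ M) : (M ∩ cutE G X).card = 1 := by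
  rw [← cutE_compl]; exact h.2.2.1

lemma contr_edge_cases₁ {G : SimpleGraph V} {X : Set V} {M : Finset (Sym2 V)}
    (h : IsPMContr G Xᶜ M) {f : Sym2 V} (hf : f ∈ M) : f ∈ cutE G X ∨ allIn X f := by
  rcases edge_cases (X := X) (h.1 hf) with h1 | h1 | h1
  · exact Or.inl h1
  · exact Or.inr h1
  · exact absurd h1 (h.2.1 f hf)

lemma contr_edge_cases₂ {G : SimpleGraph V} {X : Set V} {M : Finset (Sym2 V)}
    (h : IsPMContr G X M) {f : Sym2 V} (hf : f ∈ M) : f ∈ cutE G X ∨ allIn Xᶜ f := by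
  rcases edge_cases (X := X) (h.1 hf) with h1 | h1 | h1
  · exact Or.inl h1
  · exact absurd h1 (h.2.1 f hf)
  · exact Or.inr h1


lemma comp_pm {G : SimpleGraph V} {X : Set V} {M₁ M₂ : Finset (Sym2 V)} {e : Sym2 V}
    (h₁ : IsPMContr G Xᶜ M₁) (h₂ : IsPMContr G X M₂) (heC : e ∈ cutE G X)
    (he1 : e ∈ M₁) (he2 : e ∈ M₂) :
    IsPM G (M₁ ∪ M₂) ∧ (M₁ ∪ M₂) ∩ cutE G X = {e} ∧ M₁ ∩ M₂ = {e} := by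
  have hc1 : M₁ ∩ cutE G X = {e} := inter_eq_singleton he1 heC (contr_cutcard₁ h₁)
  have hc2 : M₂ ∩ cutE G X = {e} := inter_eq_singleton he2 heC h₂.2.2.1
  have hin1 : ∀ f ∈ M₁, f ≠ e → allIn X f := by
    intro f hf hne
    rcases contr_edge_cases₁ h₁ hf with hcut | h
    · exact absurd (by rw [← Finset.mem_singleton, ← hc1]; exact Finset.mem_inter.mpr ⟨hf, hcut⟩)
        hne
    · exact h
  have hin2 : ∀ f ∈ M₂, f ≠ e → allIn Xᶜ f := by
    intro f hf hne
    rcases contr_edge_cases₂ h₂ hf with hcut | h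
    · exact absurd (by rw [← Finset.mem_singleton, ← hc2]; exact Finset.mem_inter.mpr ⟨hf, hcut⟩)
        hne
    · exact h
  refine ⟨⟨?_, ?_⟩, ?_, ?_⟩
  · intro f hf
    rcases Finset.mem_union.mp hf with hf | hf
    · exact h₁.1 hf
    · exact h₂.1 hf
  · intro v
    by_cases hv : v ∈ X
    · obtain ⟨f, ⟨hfM, hfv⟩, huniq⟩ := h₁.2.2.2 v (by simp [hv])
      refine ⟨f, ⟨Finset.mem_union_left _ hfM, hfv⟩, ?_⟩
      rintro g ⟨hg, hgv⟩
      rcases Finset.mem_union.mp hg with hg1 | hg2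
      · exact huniq g ⟨hg1, hgv⟩
      · by_cases hge : g = e
        · subst hge
          exact huniq g ⟨he1, hgv⟩
        · exact absurd hv (hin2 g hg2 hge v hgv)
    · obtain ⟨f, ⟨hfM, hfv⟩, huniq⟩ := h₂.2.2.2 v hv
      refine ⟨f, ⟨Finset.mem_union_right _ hfM, hfv⟩, ?_⟩
      rintro g ⟨hg, hgv⟩
      rcases Finset.mem_union.mp hg with hg1 | hg2
      · by_cases hge : g = e
        · subst hge
          exact huniq g ⟨he2, hgv⟩
        · exact absurd (hin1 g hg1 hge v hgv) hv
      · exact huniq g ⟨hg2, hgv⟩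
  · ext f
    simp only [Finset.mem_inter, Finset.mem_union, Finset.mem_singleton]
    constructor
    · rintro ⟨hf | hf, hfC⟩
      · rw [← Finset.mem_singleton, ← hc1]; exact Finset.mem_inter.mpr ⟨hf, hfC⟩
      · rw [← Finset.mem_singleton, ← hc2]; exact Finset.mem_inter.mpr ⟨hf, hfC⟩
    · rintro rfl
      exact ⟨Or.inl he1, heC⟩
  · ext f
    simp only [Finset.mem_inter, Finset.mem_singleton]
    constructor
    · rintro ⟨hf1, hf2⟩
      by_contra hne
      exact not_allIn_compl (hin1 f hf1 hne) (hin2 f hf2 hne)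
    · rintro rfl
      exact ⟨he1, he2⟩

lemma indVec_union_eq {M₁ M₂ : Finset (Sym2 V)} {e : Sym2 V} (h : M₁ ∩ M₂ = {e}) :
    indVec (M₁ ∪ M₂) = indVec M₁ + indVec M₂ - indVec {e} := by
  ext f
  have hiff : f ∈ M₁ ∧ f ∈ M₂ ↔ f = e := by
    rw [← Finset.mem_inter, h, Finset.mem_singleton]
  simp only [indVec, Pi.add_apply, Pi.sub_apply, Finset.mem_union, Finset.mem_singleton]
  by_cases h1 : f ∈ M₁ <;> by_cases h2 : f ∈ M₂ <;> by_cases h3 : f = e <;> simp_all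

/-- the part of `M` not lying entirely inside `Y` -/
def partX (Y : Set V) (M : Finset (Sym2 V)) : Finset (Sym2 V) :=
  M.filter fun f => ¬ ∀ v ∈ f, v ∈ Y

lemma mem_partX {Y : Set V} {M : Finset (Sym2 V)} {f : Sym2 V} :
    f ∈ partX Y M ↔ f ∈ M ∧ ¬ allIn Y f := by
  simp only [partX, Finset.mem_filter, allIn]

lemma partX_union {Y : Set V} {M N : Finset (Sym2 V)} :
    partX Y (M ∪ N) = partX Y M ∪ partX Y N := by
  ext f
  simp only [mem_partX, Finset.mem_union]
  tauto

lemma partX_self₁ {G : SimpleGraph V} {X : Set V} {M : Finset (Sym2 V)}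
    (h : IsPMContr G Xᶜ M) : partX Xᶜ M = M := by
  ext f
  simp only [mem_partX]
  exact ⟨fun h' => h'.1, fun hf => ⟨hf, h.2.1 f hf⟩⟩

lemma partX_self₂ {G : SimpleGraph V} {X : Set V} {M : Finset (Sym2 V)}
    (h : IsPMContr G X M) : partX X M = M := by
  ext f
  simp only [mem_partX]
  exact ⟨fun h' => h'.1, fun hf => ⟨hf, h.2.1 f hf⟩⟩

lemma partX_cut₁ {G : SimpleGraph V} {X : Set V} {M : Finset (Sym2 V)}
    (h : IsPMContr G Xᶜ M) : partX X M = M ∩ cutE G X := by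
  ext f
  rw [mem_partX, Finset.mem_inter]
  constructor
  · rintro ⟨hf, hna⟩
    rcases contr_edge_cases₁ h hf with hc | hc
    · exact ⟨hf, hc⟩
    · exact absurd hc hna
  · rintro ⟨hf, hc⟩
    exact ⟨hf, (cut_not_allIn hc).1⟩

lemma partX_cut₂ {G : SimpleGraph V} {X : Set V} {M : Finset (Sym2 V)}
    (h : IsPMContr G X M) : partX Xᶜ M = M ∩ cutE G X := by
  ext f
  rw [mem_partX, Finset.mem_inter]
  constructor
  · rintro ⟨hf, hna⟩
    rcases contr_edge_cases₂ h hf with hc | hc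
    · exact ⟨hf, hc⟩
    · exact absurd hc hna
  · rintro ⟨hf, hc⟩
    exact ⟨hf, (cut_not_allIn hc).2⟩

lemma decomp_pm {G : SimpleGraph V} {X : Set V} {M : Finset (Sym2 V)} {e : Sym2 V}
    (hM : IsPM G M) (hC : M ∩ cutE G X = {e}) :
    IsPMContr G Xᶜ (partX Xᶜ M) ∧ IsPMContr G X (partX X M) ∧
      partX Xᶜ M ∪ partX X M = M ∧ e ∈ partX Xᶜ M ∧ e ∈ partX X M := by
  have heMC : e ∈ M ∩ cutE G X := by rw [hC]; exact Finset.mem_singleton_self e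
  have heM : e ∈ M := (Finset.mem_inter.mp heMC).1
  have heC : e ∈ cutE G X := (Finset.mem_inter.mp heMC).2
  have hna := cut_not_allIn heC
  have hcases : ∀ f ∈ M, f = e ∨ allIn X f ∨ allIn Xᶜ f := by
    intro f hf
    rcases edge_cases (X := X) (hM.1 hf) with hc | hc | hc
    · left
      rw [← Finset.mem_singleton, ← hC]
      exact Finset.mem_inter.mpr ⟨hf, hc⟩
    · exact Or.inr (Or.inl hc)
    · exact Or.inr (Or.inr hc)
  have hP1 : IsPMContr G Xᶜ (partX Xᶜ M) := by
    refine ⟨?_, ?_, ?_, ?_⟩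
    · intro f hf
      exact hM.1 (Finset.mem_coe.mpr (mem_partX.mp hf).1)
    · intro f hf
      exact (mem_partX.mp hf).2
    · rw [cutE_compl]
      have : partX Xᶜ M ∩ cutE G X = {e} := by
        ext f
        rw [Finset.mem_inter, mem_partX]
        constructor
        · rintro ⟨⟨hf, -⟩, hc⟩
          rw [← hC]
          exact Finset.mem_inter.mpr ⟨hf, hc⟩
        · rintro hf
          rw [Finset.mem_singleton] at hf
          subst hf
          exact ⟨⟨heM, hna.2⟩, heC⟩
      rw [this, Finset.card_singleton]
    · intro v hv
      rw [Set.mem_compl_iff, not_not] at hv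
      obtain ⟨f, ⟨hfM, hfv⟩, huniq⟩ := hM.2 v
      refine ⟨f, ⟨mem_partX.mpr ⟨hfM, fun h => (h v hfv) hv⟩, hfv⟩, ?_⟩
      rintro g ⟨hg, hgv⟩
      exact huniq g ⟨(mem_partX.mp hg).1, hgv⟩
  have hP2 : IsPMContr G X (partX X M) := by
    refine ⟨?_, ?_, ?_, ?_⟩
    · intro f hf
      exact hM.1 (Finset.mem_coe.mpr (mem_partX.mp hf).1)
    · intro f hf
      exact (mem_partX.mp hf).2
    · have : partX X M ∩ cutE G X = {e} := by
        ext f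
        rw [Finset.mem_inter, mem_partX]
        constructor
        · rintro ⟨⟨hf, -⟩, hc⟩
          rw [← hC]
          exact Finset.mem_inter.mpr ⟨hf, hc⟩
        · rintro hf
          rw [Finset.mem_singleton] at hf
          subst hf
          exact ⟨⟨heM, hna.1⟩, heC⟩
      rw [this, Finset.card_singleton]
    · intro v hv
      obtain ⟨f, ⟨hfM, hfv⟩, huniq⟩ := hM.2 v
      refine ⟨f, ⟨mem_partX.mpr ⟨hfM, fun h => hv (h v hfv)⟩, hfv⟩, ?_⟩
      rintro g ⟨hg, hgv⟩
      exact huniq g ⟨(mem_partX.mp hg).1, hgv⟩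
  refine ⟨hP1, hP2, ?_, mem_partX.mpr ⟨heM, hna.2⟩, mem_partX.mpr ⟨heM, hna.1⟩⟩
  ext f
  simp only [Finset.mem_union, mem_partX]
  constructor
  · rintro (⟨hf, -⟩ | ⟨hf, -⟩) <;> exact hf
  · intro hf
    by_cases h : allIn X f
    · exact Or.inl ⟨hf, fun h2 => not_allIn_compl h h2⟩
    · exact Or.inr ⟨hf, h⟩

/-- coordinate projection killing all edges inside `Y` -/
def projL (Y : Set V) : (Sym2 V → ℝ) →ₗ[ℝ] (Sym2 V → ℝ) where
  toFun x := fun f => if ∀ v ∈ f, v ∈ Y then 0 else x f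
  map_add' x y := by
    ext f
    by_cases h : ∀ v ∈ f, v ∈ Y
    · simp only [Pi.add_apply, if_pos h]
      norm_num
    · simp only [Pi.add_apply, if_neg h]
  map_smul' c x := by
    ext f
    by_cases h : ∀ v ∈ f, v ∈ Y
    · simp only [Pi.smul_apply, if_pos h, smul_zero, RingHom.id_apply]
    · simp only [Pi.smul_apply, if_neg h, RingHom.id_apply]

lemma projL_indVec {Y : Set V} {M : Finset (Sym2 V)} :
    projL Y (indVec M) = indVec (partX Y M) := by
  ext f
  show (if ∀ v ∈ f, v ∈ Y then 0 else indVec M f) = indVec (partX Y M) f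
  simp only [indVec]
  by_cases h : ∀ v ∈ f, v ∈ Y
  · have hnp : f ∉ partX Y M := fun hf => (mem_partX.mp hf).2 h
    rw [if_pos h, if_neg hnp]
  · rw [if_neg h]
    by_cases hf : f ∈ M
    · rw [if_pos hf, if_pos (mem_partX.mpr ⟨hf, h⟩)]
    · rw [if_neg hf, if_neg (fun hc => hf (mem_partX.mp hc).1)]

lemma projL_integral {Y : Set V} {x : Sym2 V → ℝ} (h : Integral x) : Integral (projL Y x) := by
  intro f
  by_cases hf : ∀ v ∈ f, v ∈ Y
  · refine ⟨0, ?_⟩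
    show (if ∀ v ∈ f, v ∈ Y then 0 else x f) = ((0 : ℤ) : ℝ)
    rw [if_pos hf]
    norm_num
  · obtain ⟨n, hn⟩ := h f
    refine ⟨n, ?_⟩
    show (if ∀ v ∈ f, v ∈ Y then 0 else x f) = (n : ℝ)
    rw [if_neg hf]
    exact hn

lemma pm_meets_cut {G : SimpleGraph V} {X : Set V} {M : Finset (Sym2 V)}
    (hodd : Odd X.toFinset.card) (hM : IsPM G M) : 1 ≤ (M ∩ cutE G X).card := by
  by_contra hcon
  push_neg at hcon
  have hMC : M ∩ cutE G X = ∅ := Finset.card_eq_zero.mp (Nat.lt_one_iff.mp hcon)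
  choose φ hφ1 hφ2 using hM.2
  have hin : ∀ v ∈ X, allIn X (φ v) := by
    intro v hv
    rcases edge_cases (X := X) (hM.1 (hφ1 v).1) with hc | hc | hc
    · exact absurd (Finset.mem_inter.mpr ⟨(hφ1 v).1, hc⟩) (by simp [hMC])
    · exact hc
    · exact absurd (hc v (hφ1 v).2 hv) (by simp [hv])
  set t : Finset (Sym2 V) := M.filter (fun f => allIn X f) with ht
  have hmaps : ∀ v ∈ X.toFinset, φ v ∈ t := by
    intro v hv
    rw [Set.mem_toFinset] at hv
    exact Finset.mem_filter.mpr ⟨(hφ1 v).1, hin v hv⟩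
  have hcard := Finset.card_eq_sum_card_fiberwise hmaps
  have hfib : ∀ b ∈ t, (X.toFinset.filter fun v => φ v = b).card = 2 := by
    intro b hb
    obtain ⟨hbM, hbin⟩ := Finset.mem_filter.mp hb
    have hbe : b ∈ G.edgeSet := hM.1 hbM
    induction b with
    | _ u w =>
      have huw : u ≠ w := (G.mem_edgeSet.mp hbe).ne
      have : (X.toFinset.filter fun v => φ v = s(u, w)) = {u, w} := by
        ext v
        simp only [Finset.mem_filter, Set.mem_toFinset, Finset.mem_insert, Finset.mem_singleton]
        constructor
        · rintro ⟨-, hφv⟩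
          have : v ∈ φ v := (hφ1 v).2
          rw [hφv] at this
          exact Sym2.mem_iff.mp this
        · have hu : u ∈ X := hbin u (Sym2.mem_mk_left u w)
          have hw : w ∈ X := hbin w (Sym2.mem_mk_right u w)
          rintro (rfl | rfl)
          · exact ⟨hu, (hφ2 v s(v, w) ⟨hbM, Sym2.mem_mk_left v w⟩).symm⟩
          · exact ⟨hw, (hφ2 v s(u, v) ⟨hbM, Sym2.mem_mk_right u v⟩).symm⟩
      rw [this, Finset.card_insert_of_notMem (by simp [huw]), Finset.card_singleton]
  rw [Finset.sum_congr rfl hfib, Finset.sum_const, smul_eq_mul] at hcard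
  have : Even X.toFinset.card := ⟨t.card, by omega⟩
  exact (Nat.not_even_iff_odd.mpr hodd) this

lemma exists_coeffs_real {B : Finset (Finset (Sym2 V))} {x : Sym2 V → ℝ}
    (hx : x ∈ Submodule.span ℝ (indVec '' (B : Set (Finset (Sym2 V))))) :
    ∃ c : Finset (Sym2 V) → ℝ, x = ∑ A ∈ B, c A • indVec A := by
  rw [← Finset.coe_image] at hx
  obtain ⟨f, -, hf⟩ := Submodule.mem_span_finset.mp hx
  refine ⟨fun A => f (indVec A), ?_⟩
  rw [← hf, Finset.sum_image (fun x _ y _ h => indVec_injective h)]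

lemma exists_coeffs_int {B : Finset (Finset (Sym2 V))} {x : Sym2 V → ℝ}
    (hx : x ∈ Submodule.span ℤ (indVec '' (B : Set (Finset (Sym2 V))))) :
    ∃ c : Finset (Sym2 V) → ℤ, x = ∑ A ∈ B, ((c A : ℝ)) • indVec A := by
  rw [← Finset.coe_image] at hx
  obtain ⟨f, -, hf⟩ := Submodule.mem_span_finset.mp hx
  refine ⟨fun A => f (indVec A), ?_⟩
  rw [← hf, Finset.sum_image (fun x _ y _ h => indVec_injective h)]
  apply Finset.sum_congr rfl
  intro A _
  rw [Int.cast_smul_eq_zsmul]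

lemma li_coeffs {B : Finset (Finset (Sym2 V))}
    (hli : LinearIndependent ℝ (fun M : B => indVec M.1)) {c : Finset (Sym2 V) → ℝ}
    (h : ∑ A ∈ B, c A • indVec A = 0) : ∀ A ∈ B, c A = 0 := by
  have h2 : ∑ i : B, c i.1 • indVec i.1 = 0 := by
    rw [Finset.sum_coe_sort B (fun A => c A • indVec A)]
    exact h
  have := Fintype.linearIndependent_iff.mp hli (fun A => c A.1) h2
  intro A hA
  exact this ⟨A, hA⟩

lemma edgeSum_indVec {M A : Finset (Sym2 V)} : edgeSum (indVec M) A = ((A ∩ M).card : ℝ) := by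
  rw [edgeSum]
  have : ∀ e ∈ A, indVec M e = if e ∈ M then (1 : ℝ) else 0 := fun e _ => rfl
  rw [Finset.sum_congr rfl this, Finset.sum_boole]
  congr 1

lemma edgeSum_sum {ι : Type*} {t : Finset ι} {f : ι → Sym2 V → ℝ} {A : Finset (Sym2 V)} :
    edgeSum (∑ i ∈ t, f i) A = ∑ i ∈ t, edgeSum (f i) A := by
  simp only [edgeSum, Finset.sum_apply]
  rw [Finset.sum_comm]

lemma edgeSum_smul {w : ℝ} {y : Sym2 V → ℝ} {A : Finset (Sym2 V)} :
    edgeSum (w • y) A = w * edgeSum y A := by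
  simp only [edgeSum, Pi.smul_apply, smul_eq_mul, Finset.mul_sum]

lemma faceCut_span {G : SimpleGraph V} {X : Set V} (hodd : Odd X.toFinset.card) :
    Submodule.span ℝ (faceCut G X) =
      Submodule.span ℝ {x | ∃ M, IsPM G M ∧ (M ∩ cutE G X).card = 1 ∧ x = indVec M} := by
  apply le_antisymm
  · rw [Submodule.span_le]
    rintro x ⟨hxP, hxsum⟩
    rw [pmPolytope, _root_.convexHull_eq] at hxP
    obtain ⟨ι, t, w, z, hw0, hw1, hz, hcm⟩ := hxP
    rw [Finset.centerMass_eq_of_sum_1 _ _ hw1] at hcm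
    have hes : ∀ i ∈ t, ∃ M, IsPM G M ∧ z i = indVec M := fun i hi => hz i hi
    have hge : ∀ i ∈ t, 1 ≤ edgeSum (z i) (cutE G X) := by
      intro i hi
      obtain ⟨M, hM, hzi⟩ := hes i hi
      rw [hzi, edgeSum_indVec, Finset.inter_comm]
      exact_mod_cast pm_meets_cut hodd hM
    have hsum0 : ∑ i ∈ t, w i * (edgeSum (z i) (cutE G X) - 1) = 0 := by
      have h1 : edgeSum x (cutE G X) = ∑ i ∈ t, w i * edgeSum (z i) (cutE G X) := by
        rw [← hcm, edgeSum_sum]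
        apply Finset.sum_congr rfl
        intro i _
        exact edgeSum_smul
      have : ∑ i ∈ t, w i * (edgeSum (z i) (cutE G X) - 1) =
          (∑ i ∈ t, w i * edgeSum (z i) (cutE G X)) - ∑ i ∈ t, w i := by
        rw [← Finset.sum_sub_distrib]
        apply Finset.sum_congr rfl
        intro i _
        ring
      rw [this, ← h1, hxsum, hw1, sub_self]
    have hterm : ∀ i ∈ t, w i * (edgeSum (z i) (cutE G X) - 1) = 0 :=
      (Finset.sum_eq_zero_iff_of_nonneg (fun i hi =>
        mul_nonneg (hw0 i hi) (by linarith [hge i hi]))).mp hsum0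
    rw [← hcm]
    apply Submodule.sum_mem
    intro i hi
    by_cases hwi : w i = 0
    · rw [hwi, zero_smul]
      exact Submodule.zero_mem _
    · apply Submodule.smul_mem
      apply Submodule.subset_span
      obtain ⟨M, hM, hzi⟩ := hes i hi
      have hcard : (M ∩ cutE G X).card = 1 := by
        have := hterm i hi
        have h2 : edgeSum (z i) (cutE G X) = 1 := by
          rcases mul_eq_zero.mp this with h | h
          · exact absurd h hwi
          · linarith
        rw [hzi, edgeSum_indVec, Finset.inter_comm] at h2
        exact_mod_cast h2
      exact ⟨M, hM, hcard, hzi⟩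
  · rw [Submodule.span_le]
    rintro x ⟨M, hM, h1, rfl⟩
    apply Submodule.subset_span
    refine ⟨subset_convexHull ℝ _ ⟨M, hM, rfl⟩, ?_⟩
    rw [edgeSum_indVec, Finset.inter_comm, h1, Nat.cast_one]


lemma merger_regroup {B S : Finset (Finset (Sym2 V))} {Y : Set V}
    (Gc : Finset (Sym2 V) → ℝ) (hmaps : ∀ M ∈ S, partX Y M ∈ B) :
    projL Y (∑ M ∈ S, Gc M • indVec M) =
      ∑ A ∈ B, (∑ M ∈ S.filter (fun M => partX Y M = A), Gc M) • indVec A := by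
  rw [map_sum]
  rw [show (∑ M ∈ S, projL Y (Gc M • indVec M)) = ∑ M ∈ S, Gc M • indVec (partX Y M) from
    Finset.sum_congr rfl (fun M _ => by rw [map_smul, projL_indVec])]
  rw [← Finset.sum_fiberwise_of_maps_to hmaps (fun M => Gc M • indVec (partX Y M))]
  apply Finset.sum_congr rfl
  intro A _
  rw [Finset.sum_smul]
  apply Finset.sum_congr rfl
  intro M hMf
  rw [(Finset.mem_filter.mp hMf).2]


end Aux18



section Merger

variable {V : Type} [Fintype V] [DecidableEq V]
variable [Nonempty V] {G : SimpleGraph V} {X : Set V} {B₁ B₂ : Finset (Finset (Sym2 V))}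
  {m₁ m₂ : Sym2 V → Finset (Sym2 V)}

lemma mem_merger {M : Finset (Sym2 V)} :
    M ∈ merger B₁ B₂ m₁ m₂ (cutE G X) ↔
      ∃ e ∈ cutE G X,
        (∃ N ∈ B₂, e ∈ N ∧ M = m₁ e ∪ N) ∨
        (∃ A ∈ B₁, (e ∈ A ∧ A ≠ m₁ e) ∧ M = A ∪ m₂ e) := by
  simp only [merger, Finset.mem_biUnion, Finset.mem_union, Finset.mem_image, Finset.mem_filter]
  constructor
  · rintro ⟨e, he, ⟨N, ⟨hN, heN⟩, rfl⟩ | ⟨A, ⟨hA, heA, hne⟩, rfl⟩⟩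
    · exact ⟨e, he, Or.inl ⟨N, hN, heN, rfl⟩⟩
    · exact ⟨e, he, Or.inr ⟨A, hA, ⟨heA, hne⟩, rfl⟩⟩
  · rintro ⟨e, he, ⟨N, hN, heN, rfl⟩ | ⟨A, hA, ⟨heA, hne⟩, rfl⟩⟩
    · exact ⟨e, he, Or.inl ⟨N, ⟨hN, heN⟩, rfl⟩⟩
    · exact ⟨e, he, Or.inr ⟨A, ⟨hA, heA, hne⟩, rfl⟩⟩

/-- the distinguished cut edge of a matching -/
noncomputable def cE (G : SimpleGraph V) (X : Set V) [Nonempty V] (A : Finset (Sym2 V)) :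
    Sym2 V :=
  if h : (A ∩ cutE G X).Nonempty then h.choose else s(Classical.arbitrary V, Classical.arbitrary V)

lemma cE_spec [Nonempty V] {A : Finset (Sym2 V)} (h : (A ∩ cutE G X).card = 1) :
    A ∩ cutE G X = {cE G X A} := by
  have hne : (A ∩ cutE G X).Nonempty := Finset.card_pos.mp (by omega)
  have hmem : cE G X A ∈ A ∩ cutE G X := by
    rw [cE, dif_pos hne]
    exact hne.choose_spec
  obtain ⟨a, ha⟩ := Finset.card_eq_one.mp h
  rw [ha] at hmem ⊢
  rw [Finset.mem_singleton] at hmem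
  rw [hmem]

lemma cE_mem [Nonempty V] {A : Finset (Sym2 V)} (h : (A ∩ cutE G X).card = 1) :
    cE G X A ∈ A ∧ cE G X A ∈ cutE G X := by
  have := cE_spec h
  have hm : cE G X A ∈ A ∩ cutE G X := by rw [this]; exact Finset.mem_singleton_self _
  exact Finset.mem_inter.mp hm

lemma eq_cE [Nonempty V] {A : Finset (Sym2 V)} {f : Sym2 V} (h : (A ∩ cutE G X).card = 1)
    (hfA : f ∈ A) (hfC : f ∈ cutE G X) : f = cE G X A := by
  have := cE_spec h
  have : f ∈ ({cE G X A} : Finset (Sym2 V)) := this ▸ Finset.mem_inter.mpr ⟨hfA, hfC⟩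
  exact Finset.mem_singleton.mp this

lemma span_diff_decomp {B : Finset (Finset (Sym2 V))} {m : Sym2 V → Finset (Sym2 V)}
    (hB : ∀ A ∈ B, (A ∩ cutE G X).card = 1) {x : Sym2 V → ℝ} {c : Finset (Sym2 V) → ℝ}
    (hx : x = ∑ A ∈ B, c A • indVec A) :
    x = (∑ A ∈ B, c A • (indVec A - indVec (m (cE G X A)))) +
      ∑ e ∈ cutE G X, x e • indVec (m e) := by
  have hxe : ∀ e, x e = ∑ A ∈ B, if e ∈ A then c A else 0 := by
    intro e
    rw [hx, Finset.sum_apply]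
    apply Finset.sum_congr rfl
    intro A hA
    simp [indVec]
  have hswap : ∑ e ∈ cutE G X, x e • indVec (m e) =
      ∑ A ∈ B, c A • indVec (m (cE G X A)) := by
    have hh : ∀ e ∈ cutE G X, x e • indVec (m e) =
        ∑ A ∈ B, if e ∈ A then c A • indVec (m e) else 0 := by
      intro e he
      rw [hxe e, Finset.sum_smul]
      apply Finset.sum_congr rfl
      intro A hA
      rw [ite_smul, zero_smul]
    rw [Finset.sum_congr rfl hh, Finset.sum_comm]
    apply Finset.sum_congr rfl
    intro A hA
    have hcard := hB A hA
    have hm := cE_mem (G := G) (X := X) hcard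
    rw [Finset.sum_eq_single_of_mem (cE G X A) hm.2 (fun f hf hne => by
      rw [if_neg (fun hfA => hne (eq_cE hcard hfA hf))]), if_pos hm.1]
  rw [hswap, ← Finset.sum_add_distrib, hx]
  apply Finset.sum_congr rfl
  intro A hA
  rw [smul_sub]
  abel

variable (hB₁pm : ∀ M ∈ B₁, IsPMContr G Xᶜ M) (hB₂pm : ∀ M ∈ B₂, IsPMContr G X M)
  (hm₁ : ∀ e ∈ cutE G X, m₁ e ∈ B₁ ∧ e ∈ m₁ e)
  (hm₂ : ∀ e ∈ cutE G X, m₂ e ∈ B₂ ∧ e ∈ m₂ e)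

include hB₁pm hB₂pm hm₁ hm₂

lemma merger_struct {M : Finset (Sym2 V)} (hM : M ∈ merger B₁ B₂ m₁ m₂ (cutE G X)) :
    ∃ e ∈ cutE G X, IsPM G M ∧ M ∩ cutE G X = {e} ∧
      IsPMContr G Xᶜ (partX Xᶜ M) ∧ IsPMContr G X (partX X M) ∧
      e ∈ partX Xᶜ M ∧ e ∈ partX X M ∧ partX Xᶜ M ∈ B₁ ∧ partX X M ∈ B₂ ∧
      partX Xᶜ M ∪ partX X M = M ∧
      (partX Xᶜ M = m₁ e ∨ (partX Xᶜ M ≠ m₁ e ∧ partX X M = m₂ e)) := by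
  rcases mem_merger.mp hM with ⟨e, heC, ⟨N, hN, heN, rfl⟩ | ⟨A, hA, ⟨heA, hne⟩, rfl⟩⟩
  · have h1 := hB₁pm _ (hm₁ e heC).1
    have h2 := hB₂pm N hN
    obtain ⟨hpm, hcut, hint⟩ := comp_pm h1 h2 heC (hm₁ e heC).2 heN
    have hNC : N ∩ cutE G X = {e} := inter_eq_singleton heN heC h2.2.2.1
    have hp1 : partX Xᶜ (m₁ e ∪ N) = m₁ e := by
      rw [partX_union, partX_self₁ h1, partX_cut₂ h2, hNC,
        Finset.union_eq_left.mpr (Finset.singleton_subset_iff.mpr (hm₁ e heC).2)]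
    have hm1C : m₁ e ∩ cutE G X = {e} := inter_eq_singleton (hm₁ e heC).2 heC (contr_cutcard₁ h1)
    have hp2 : partX X (m₁ e ∪ N) = N := by
      rw [partX_union, partX_self₂ h2, partX_cut₁ h1, hm1C,
        Finset.union_comm, Finset.union_eq_left.mpr (Finset.singleton_subset_iff.mpr heN)]
    refine ⟨e, heC, hpm, hcut, ?_, ?_, ?_, ?_, ?_, ?_, ?_, Or.inl hp1⟩
    · rw [hp1]; exact h1
    · rw [hp2]; exact h2
    · rw [hp1]; exact (hm₁ e heC).2
    · rw [hp2]; exact heN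
    · rw [hp1]; exact (hm₁ e heC).1
    · rw [hp2]; exact hN
    · rw [hp1, hp2]
  · have h1 := hB₁pm A hA
    have h2 := hB₂pm _ (hm₂ e heC).1
    obtain ⟨hpm, hcut, hint⟩ := comp_pm h1 h2 heC heA (hm₂ e heC).2
    have hAC : A ∩ cutE G X = {e} := inter_eq_singleton heA heC (contr_cutcard₁ h1)
    have hm2C : m₂ e ∩ cutE G X = {e} := inter_eq_singleton (hm₂ e heC).2 heC h2.2.2.1
    have hp1 : partX Xᶜ (A ∪ m₂ e) = A := by
      rw [partX_union, partX_self₁ h1, partX_cut₂ h2, hm2C,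
        Finset.union_eq_left.mpr (Finset.singleton_subset_iff.mpr heA)]
    have hp2 : partX X (A ∪ m₂ e) = m₂ e := by
      rw [partX_union, partX_self₂ h2, partX_cut₁ h1, hAC,
        Finset.union_comm, Finset.union_eq_left.mpr (Finset.singleton_subset_iff.mpr (hm₂ e heC).2)]
    refine ⟨e, heC, hpm, hcut, ?_, ?_, ?_, ?_, ?_, ?_, ?_, Or.inr ⟨by rw [hp1]; exact hne, hp2⟩⟩
    · rw [hp1]; exact h1
    · rw [hp2]; exact h2
    · rw [hp1]; exact heA
    · rw [hp2]; exact (hm₂ e heC).2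
    · rw [hp1]; exact hA
    · rw [hp2]; exact (hm₂ e heC).1
    · rw [hp1, hp2]

/-- `M` arises from a non-distinguished matching of `B₁` -/
def TypeII (G : SimpleGraph V) (X : Set V) (m₁ : Sym2 V → Finset (Sym2 V))
    (M : Finset (Sym2 V)) : Prop :=
  ∃ e ∈ cutE G X, M ∩ cutE G X = {e} ∧ partX Xᶜ M ≠ m₁ e

lemma merger_fiber_typeII {M M₀ : Finset (Sym2 V)}
    (hM : M ∈ merger B₁ B₂ m₁ m₂ (cutE G X)) (hM₀ : M₀ ∈ merger B₁ B₂ m₁ m₂ (cutE G X))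
    (hT : TypeII G X m₁ M₀) (hp : partX Xᶜ M = partX Xᶜ M₀) : M = M₀ := by
  obtain ⟨e₀, he₀C, hcut₀, hne₀⟩ := hT
  obtain ⟨e, heC, -, hcut, hPM1, -, he1, -, hB1, -, hun, hdisj⟩ :=
    merger_struct hB₁pm hB₂pm hm₁ hm₂ hM
  obtain ⟨e', he'C, -, hcut', -, -, he1', -, hB1', -, hun', hdisj'⟩ :=
    merger_struct hB₁pm hB₂pm hm₁ hm₂ hM₀
  have hcard : (partX Xᶜ M₀ ∩ cutE G X).card = 1 := contr_cutcard₁ (hB₁pm _ hB1')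
  have hee' : e = e' := by
    have h1 : e = cE G X (partX Xᶜ M₀) := eq_cE hcard (hp ▸ he1) heC
    have h2 : e' = cE G X (partX Xᶜ M₀) := eq_cE hcard he1' he'C
    rw [h1, h2]
  subst hee'
  have hee0 : e = e₀ := by
    have : ({e} : Finset (Sym2 V)) = {e₀} := by rw [← hcut', hcut₀]
    exact Finset.singleton_injective this
  subst hee0
  rcases hdisj' with h | ⟨-, hp2'⟩
  · exact absurd h hne₀
  rcases hdisj with h | ⟨-, hp2⟩
  · rw [hp] at h
    exact absurd h hne₀
  rw [← hun, ← hun', hp, hp2, hp2']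

lemma merger_fiber_typeI {M M₀ : Finset (Sym2 V)}
    (hM : M ∈ merger B₁ B₂ m₁ m₂ (cutE G X)) (hM₀ : M₀ ∈ merger B₁ B₂ m₁ m₂ (cutE G X))
    (hI : ¬ TypeII G X m₁ M₀) (hp : partX X M = partX X M₀) : M = M₀ ∨ TypeII G X m₁ M := by
  obtain ⟨e, heC, -, hcut, -, -, -, he2, -, hB2, hun, hdisj⟩ :=
    merger_struct hB₁pm hB₂pm hm₁ hm₂ hM
  rcases hdisj with h1 | ⟨hne, -⟩
  · left
    obtain ⟨e', he'C, -, hcut', -, -, -, he2', -, hB2', hun', hdisj'⟩ :=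
      merger_struct hB₁pm hB₂pm hm₁ hm₂ hM₀
    rcases hdisj' with h1' | ⟨hne', -⟩
    · have hcard : (partX X M₀ ∩ cutE G X).card = 1 := (hB₂pm _ hB2').2.2.1
      have hee' : e = e' := by
        have hh1 : e = cE G X (partX X M₀) := eq_cE hcard (hp ▸ he2) heC
        have hh2 : e' = cE G X (partX X M₀) := eq_cE hcard he2' he'C
        rw [hh1, hh2]
      subst hee'
      rw [← hun, ← hun', hp, h1, h1']
    · exact absurd ⟨e', he'C, hcut', hne'⟩ hI
  · right
    exact ⟨e, heC, hcut, hne⟩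

lemma part_comp₁ {N : Finset (Sym2 V)} {e : Sym2 V} (hN : N ∈ B₂) (heC : e ∈ cutE G X)
    (heN : e ∈ N) : partX Xᶜ (m₁ e ∪ N) = m₁ e ∧ partX X (m₁ e ∪ N) = N := by
  have hh1 := hB₁pm _ (hm₁ e heC).1
  have hh2 := hB₂pm N hN
  have hNC : N ∩ cutE G X = {e} := inter_eq_singleton heN heC hh2.2.2.1
  have hm1C : m₁ e ∩ cutE G X = {e} :=
    inter_eq_singleton (hm₁ e heC).2 heC (contr_cutcard₁ hh1)
  constructor
  · rw [partX_union, partX_self₁ hh1, partX_cut₂ hh2, hNC,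
      Finset.union_eq_left.mpr (Finset.singleton_subset_iff.mpr (hm₁ e heC).2)]
  · rw [partX_union, partX_self₂ hh2, partX_cut₁ hh1, hm1C,
      Finset.union_comm, Finset.union_eq_left.mpr (Finset.singleton_subset_iff.mpr heN)]

lemma part_comp₂ {A : Finset (Sym2 V)} {e : Sym2 V} (hA : A ∈ B₁) (heC : e ∈ cutE G X)
    (heA : e ∈ A) : partX Xᶜ (A ∪ m₂ e) = A ∧ partX X (A ∪ m₂ e) = m₂ e := by
  have hh1 := hB₁pm A hA
  have hh2 := hB₂pm _ (hm₂ e heC).1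
  have hAC : A ∩ cutE G X = {e} := inter_eq_singleton heA heC (contr_cutcard₁ hh1)
  have hm2C : m₂ e ∩ cutE G X = {e} := inter_eq_singleton (hm₂ e heC).2 heC hh2.2.2.1
  constructor
  · rw [partX_union, partX_self₁ hh1, partX_cut₂ hh2, hm2C,
      Finset.union_eq_left.mpr (Finset.singleton_subset_iff.mpr heA)]
  · rw [partX_union, partX_self₂ hh2, partX_cut₁ hh1, hAC,
      Finset.union_comm, Finset.union_eq_left.mpr (Finset.singleton_subset_iff.mpr (hm₂ e heC).2)]

lemma mem_part_e {M : Finset (Sym2 V)} {e : Sym2 V} (heC : e ∈ cutE G X)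
    (h : M ∈ ((B₂.filter fun N => e ∈ N).image fun N => m₁ e ∪ N) ∪
      ((B₁.filter fun N => e ∈ N ∧ N ≠ m₁ e).image fun N => N ∪ m₂ e)) :
    M ∩ cutE G X = {e} := by
  rcases Finset.mem_union.mp h with h | h
  · obtain ⟨N, hN, rfl⟩ := Finset.mem_image.mp h
    obtain ⟨hN, heN⟩ := Finset.mem_filter.mp hN
    exact (comp_pm (hB₁pm _ (hm₁ e heC).1) (hB₂pm N hN) heC (hm₁ e heC).2 heN).2.1
  · obtain ⟨A, hA, rfl⟩ := Finset.mem_image.mp h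
    obtain ⟨hA, heA, -⟩ := Finset.mem_filter.mp hA
    exact (comp_pm (hB₁pm A hA) (hB₂pm _ (hm₂ e heC).1) heC heA (hm₂ e heC).2).2.1

lemma merger_card :
    (merger B₁ B₂ m₁ m₂ (cutE G X)).card = B₁.card + B₂.card - (cutE G X).card := by
  classical
  set C := cutE G X with hC
  -- disjointness over distinct cut edges
  have hdisj : ∀ e ∈ C, ∀ e' ∈ C, e ≠ e' →
      Disjoint (((B₂.filter fun N => e ∈ N).image fun N => m₁ e ∪ N) ∪
        ((B₁.filter fun N => e ∈ N ∧ N ≠ m₁ e).image fun N => N ∪ m₂ e))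
        (((B₂.filter fun N => e' ∈ N).image fun N => m₁ e' ∪ N) ∪
        ((B₁.filter fun N => e' ∈ N ∧ N ≠ m₁ e').image fun N => N ∪ m₂ e')) := by
    intro e he e' he' hne
    rw [Finset.disjoint_left]
    intro M hMe hMe'
    have h1 := mem_part_e hB₁pm hB₂pm hm₁ hm₂ he hMe
    have h2 := mem_part_e hB₁pm hB₂pm hm₁ hm₂ he' hMe'
    rw [h1] at h2
    exact hne (Finset.singleton_injective h2)
  rw [merger, Finset.card_biUnion hdisj]
  have hterm : ∀ e ∈ C,
      (((B₂.filter fun N => e ∈ N).image fun N => m₁ e ∪ N) ∪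
        ((B₁.filter fun N => e ∈ N ∧ N ≠ m₁ e).image fun N => N ∪ m₂ e)).card =
      (B₂.filter fun N => e ∈ N).card + ((B₁.filter fun N => e ∈ N).card - 1) := by
    intro e heC
    have hinj₂ : Set.InjOn (fun N => m₁ e ∪ N) (B₂.filter fun N => e ∈ N) := by
      intro N hN N' hN' h
      obtain ⟨hN, heN⟩ := Finset.mem_filter.mp hN
      obtain ⟨hN', heN'⟩ := Finset.mem_filter.mp hN'
      have k1 := (part_comp₁ hB₁pm hB₂pm hm₁ hm₂ hN heC heN).2
      have k2 := (part_comp₁ hB₁pm hB₂pm hm₁ hm₂ hN' heC heN').2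
      rw [← k1, ← k2]
      simp only at h
      rw [h]
    have hinj₁ : Set.InjOn (fun N => N ∪ m₂ e) (B₁.filter fun N => e ∈ N ∧ N ≠ m₁ e) := by
      intro A hA A' hA' h
      obtain ⟨hA, heA, -⟩ := Finset.mem_filter.mp hA
      obtain ⟨hA', heA', -⟩ := Finset.mem_filter.mp hA'
      have k1 := (part_comp₂ hB₁pm hB₂pm hm₁ hm₂ hA heC heA).1
      have k2 := (part_comp₂ hB₁pm hB₂pm hm₁ hm₂ hA' heC heA').1
      rw [← k1, ← k2]
      simp only at h
      rw [h]
    have hdj : Disjoint ((B₂.filter fun N => e ∈ N).image fun N => m₁ e ∪ N)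
        ((B₁.filter fun N => e ∈ N ∧ N ≠ m₁ e).image fun N => N ∪ m₂ e) := by
      rw [Finset.disjoint_left]
      rintro M h1 h2
      obtain ⟨N, hN, rfl⟩ := Finset.mem_image.mp h1
      obtain ⟨hN, heN⟩ := Finset.mem_filter.mp hN
      obtain ⟨A, hA, hAeq⟩ := Finset.mem_image.mp h2
      obtain ⟨hA, heA, hAne⟩ := Finset.mem_filter.mp hA
      have k1 := (part_comp₁ hB₁pm hB₂pm hm₁ hm₂ hN heC heN).1
      have k2 := (part_comp₂ hB₁pm hB₂pm hm₁ hm₂ hA heC heA).1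
      rw [hAeq] at k2
      exact hAne (k2.symm.trans k1)
    rw [Finset.card_union_of_disjoint hdj, Finset.card_image_of_injOn hinj₂,
      Finset.card_image_of_injOn hinj₁]
    congr 1
    have : B₁.filter (fun N => e ∈ N ∧ N ≠ m₁ e) = (B₁.filter fun N => e ∈ N).erase (m₁ e) := by
      ext A
      simp only [Finset.mem_filter, Finset.mem_erase]
      tauto
    rw [this, Finset.card_erase_of_mem
      (Finset.mem_filter.mpr ⟨(hm₁ e heC).1, (hm₁ e heC).2⟩)]
  rw [Finset.sum_congr rfl hterm]
  -- ∑ counts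
  have hcnt : ∀ (B : Finset (Finset (Sym2 V))), (∀ A ∈ B, (A ∩ C).card = 1) →
      ∑ e ∈ C, (B.filter fun N => e ∈ N).card = B.card := by
    intro B hB
    have : ∀ e ∈ C, (B.filter fun N => e ∈ N).card = ∑ A ∈ B, if e ∈ A then 1 else 0 := by
      intro e he
      rw [Finset.card_filter]
    rw [Finset.sum_congr rfl this, Finset.sum_comm]
    have : ∀ A ∈ B, (∑ e ∈ C, if e ∈ A then 1 else 0) = 1 := by
      intro A hA
      rw [← Finset.card_filter]
      have : C.filter (fun e => e ∈ A) = A ∩ C := by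
        ext f
        simp only [Finset.mem_filter, Finset.mem_inter]
        tauto
      rw [this, hB A hA]
    rw [Finset.sum_congr rfl this, Finset.sum_const, smul_eq_mul, mul_one]
  have h1 : ∑ e ∈ C, (B₁.filter fun N => e ∈ N).card = B₁.card :=
    hcnt B₁ (fun A hA => contr_cutcard₁ (hB₁pm A hA))
  have h2 : ∑ e ∈ C, (B₂.filter fun N => e ∈ N).card = B₂.card :=
    hcnt B₂ (fun A hA => (hB₂pm A hA).2.2.1)
  have hge : ∀ e ∈ C, 1 ≤ (B₁.filter fun N => e ∈ N).card := by
    intro e he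
    exact Finset.card_pos.mpr ⟨m₁ e, Finset.mem_filter.mpr ⟨(hm₁ e he).1, (hm₁ e he).2⟩⟩
  have hsplit : ∑ e ∈ C, ((B₂.filter fun N => e ∈ N).card + ((B₁.filter fun N => e ∈ N).card - 1))
      = ∑ e ∈ C, (B₂.filter fun N => e ∈ N).card +
        (∑ e ∈ C, (B₁.filter fun N => e ∈ N).card - ∑ e ∈ C, 1) := by
    rw [Finset.sum_add_distrib, ← Finset.sum_tsub_distrib]
    · intro e he
      exact hge e he
  rw [hsplit, h1, h2, Finset.sum_const, smul_eq_mul, mul_one]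
  have hCB : C.card ≤ B₁.card := by
    rw [← h1]
    calc C.card = ∑ _e ∈ C, 1 := by rw [Finset.sum_const, smul_eq_mul, mul_one]
    _ ≤ ∑ e ∈ C, (B₁.filter fun N => e ∈ N).card := Finset.sum_le_sum hge
  omega

lemma m₁m₂_mem_merger {e : Sym2 V} (he : e ∈ cutE G X) :
    m₁ e ∪ m₂ e ∈ merger B₁ B₂ m₁ m₂ (cutE G X) :=
  mem_merger.mpr ⟨e, he, Or.inl ⟨m₂ e, (hm₂ e he).1, (hm₂ e he).2, rfl⟩⟩

lemma unionm₂_mem_merger {A : Finset (Sym2 V)} {e : Sym2 V} (hA : A ∈ B₁) (he : e ∈ cutE G X)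
    (heA : e ∈ A) : A ∪ m₂ e ∈ merger B₁ B₂ m₁ m₂ (cutE G X) := by
  by_cases h : A = m₁ e
  · subst h
    exact m₁m₂_mem_merger hB₁pm hB₂pm hm₁ hm₂ he
  · exact mem_merger.mpr ⟨e, he, Or.inr ⟨A, hA, ⟨heA, h⟩, rfl⟩⟩

lemma m₁union_mem_merger {N : Finset (Sym2 V)} {e : Sym2 V} (hN : N ∈ B₂) (he : e ∈ cutE G X)
    (heN : e ∈ N) : m₁ e ∪ N ∈ merger B₁ B₂ m₁ m₂ (cutE G X) :=
  mem_merger.mpr ⟨e, he, Or.inl ⟨N, hN, heN, rfl⟩⟩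

lemma indVec_pm_decomp {M : Finset (Sym2 V)} {e : Sym2 V}
    (hM : IsPM G M) (hMC : M ∩ cutE G X = {e})
    {c d : Finset (Sym2 V) → ℝ}
    (hc : indVec (partX Xᶜ M) = ∑ A ∈ B₁, c A • indVec A)
    (hd : indVec (partX X M) = ∑ N ∈ B₂, d N • indVec N) :
    indVec M =
      (∑ A ∈ B₁, c A •
        (indVec (A ∪ m₂ (cE G X A)) - indVec (m₁ (cE G X A) ∪ m₂ (cE G X A)))) +
      (∑ N ∈ B₂, d N •
        (indVec (m₁ (cE G X N) ∪ N) - indVec (m₁ (cE G X N) ∪ m₂ (cE G X N)))) +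
      indVec (m₁ e ∪ m₂ e) := by
  have heMC : e ∈ M ∩ cutE G X := by rw [hMC]; exact Finset.mem_singleton_self e
  have heC : e ∈ cutE G X := (Finset.mem_inter.mp heMC).2
  obtain ⟨h1, h2, hun, he1, he2⟩ := decomp_pm hM hMC
  have hint : partX Xᶜ M ∩ partX X M = {e} := (comp_pm h1 h2 heC he1 he2).2.2
  have hMvec : indVec M = indVec (partX Xᶜ M) + indVec (partX X M) - indVec {e} := by
    conv_lhs => rw [← hun]
    exact indVec_union_eq hint
  have hmm_vec : indVec (m₁ e ∪ m₂ e) = indVec (m₁ e) + indVec (m₂ e) - indVec {e} :=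
    indVec_union_eq
      (comp_pm (hB₁pm _ (hm₁ e heC).1) (hB₂pm _ (hm₂ e heC).1) heC (hm₁ e heC).2
        (hm₂ e heC).2).2.2
  have sdd1 := span_diff_decomp (m := m₁) (fun A hA => contr_cutcard₁ (hB₁pm A hA)) hc
  have sdd2 := span_diff_decomp (m := m₂) (fun N hN => (hB₂pm N hN).2.2.1) hd
  have hp1C : partX Xᶜ M ∩ cutE G X = {e} :=
    inter_eq_singleton he1 heC (contr_cutcard₁ h1)
  have hp2C : partX X M ∩ cutE G X = {e} := inter_eq_singleton he2 heC h2.2.2.1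
  have hchi : ∀ (p : Finset (Sym2 V)) (m : Sym2 V → Finset (Sym2 V)),
      p ∩ cutE G X = {e} → e ∈ p →
      ∑ f ∈ cutE G X, indVec p f • indVec (m f) = indVec (m e) := by
    intro p m hpC hep
    rw [Finset.sum_eq_single_of_mem e heC (fun f hf hne => by
      have hnp : f ∉ p := fun hfp => hne (by
        have : f ∈ ({e} : Finset (Sym2 V)) := hpC ▸ Finset.mem_inter.mpr ⟨hfp, hf⟩
        exact Finset.mem_singleton.mp this)
      have : indVec p f = 0 := by simp [indVec, hnp]
      rw [this, zero_smul])]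
    have : indVec p e = 1 := by simp [indVec, hep]
    rw [this, one_smul]
  rw [hchi _ m₁ hp1C he1] at sdd1
  rw [hchi _ m₂ hp2C he2] at sdd2
  have e1 : ∑ A ∈ B₁, c A • (indVec A - indVec (m₁ (cE G X A))) =
      indVec (partX Xᶜ M) - indVec (m₁ e) := (eq_sub_of_add_eq sdd1.symm)
  have e2 : ∑ N ∈ B₂, d N • (indVec N - indVec (m₂ (cE G X N))) =
      indVec (partX X M) - indVec (m₂ e) := (eq_sub_of_add_eq sdd2.symm)
  have hdiff1 : ∀ A ∈ B₁,
      c A • (indVec (A ∪ m₂ (cE G X A)) - indVec (m₁ (cE G X A) ∪ m₂ (cE G X A))) =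
      c A • (indVec A - indVec (m₁ (cE G X A))) := by
    intro A hA
    congr 1
    have hcard := contr_cutcard₁ (hB₁pm A hA)
    have hm := cE_mem (G := G) (X := X) hcard
    have u1 : indVec (A ∪ m₂ (cE G X A)) =
        indVec A + indVec (m₂ (cE G X A)) - indVec {cE G X A} :=
      indVec_union_eq (comp_pm (hB₁pm A hA) (hB₂pm _ (hm₂ _ hm.2).1) hm.2 hm.1
        (hm₂ _ hm.2).2).2.2
    have u2 : indVec (m₁ (cE G X A) ∪ m₂ (cE G X A)) =
        indVec (m₁ (cE G X A)) + indVec (m₂ (cE G X A)) - indVec {cE G X A} :=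
      indVec_union_eq (comp_pm (hB₁pm _ (hm₁ _ hm.2).1) (hB₂pm _ (hm₂ _ hm.2).1) hm.2
        (hm₁ _ hm.2).2 (hm₂ _ hm.2).2).2.2
    rw [u1, u2]
    abel
  have hdiff2 : ∀ N ∈ B₂,
      d N • (indVec (m₁ (cE G X N) ∪ N) - indVec (m₁ (cE G X N) ∪ m₂ (cE G X N))) =
      d N • (indVec N - indVec (m₂ (cE G X N))) := by
    intro N hN
    congr 1
    have hcard := (hB₂pm N hN).2.2.1
    have hm := cE_mem (G := G) (X := X) hcard
    have u1 : indVec (m₁ (cE G X N) ∪ N) =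
        indVec (m₁ (cE G X N)) + indVec N - indVec {cE G X N} :=
      indVec_union_eq (comp_pm (hB₁pm _ (hm₁ _ hm.2).1) (hB₂pm N hN) hm.2
        (hm₁ _ hm.2).2 hm.1).2.2
    have u2 : indVec (m₁ (cE G X N) ∪ m₂ (cE G X N)) =
        indVec (m₁ (cE G X N)) + indVec (m₂ (cE G X N)) - indVec {cE G X N} :=
      indVec_union_eq (comp_pm (hB₁pm _ (hm₁ _ hm.2).1) (hB₂pm _ (hm₂ _ hm.2).1) hm.2
        (hm₁ _ hm.2).2 (hm₂ _ hm.2).2).2.2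
    rw [u1, u2]
    abel
  rw [Finset.sum_congr rfl hdiff1, Finset.sum_congr rfl hdiff2, e1, e2, hmm_vec, hMvec]
  abel

lemma pm_mem_span_merger_real
    (hB₁span : Submodule.span ℝ (indVec '' (B₁ : Set (Finset (Sym2 V)))) =
      Submodule.span ℝ (contrPolytope G Xᶜ))
    (hB₂span : Submodule.span ℝ (indVec '' (B₂ : Set (Finset (Sym2 V)))) =
      Submodule.span ℝ (contrPolytope G X))
    {M : Finset (Sym2 V)} {e : Sym2 V} (hM : IsPM G M) (hMC : M ∩ cutE G X = {e}) :
    indVec M ∈ Submodule.span ℝ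
      (indVec '' ((merger B₁ B₂ m₁ m₂ (cutE G X)) : Set (Finset (Sym2 V)))) := by
  have heMC : e ∈ M ∩ cutE G X := by rw [hMC]; exact Finset.mem_singleton_self e
  have heC : e ∈ cutE G X := (Finset.mem_inter.mp heMC).2
  obtain ⟨hP1, hP2, hun, he1, he2⟩ := decomp_pm hM hMC
  have hv1 : indVec (partX Xᶜ M) ∈
      Submodule.span ℝ (indVec '' (B₁ : Set (Finset (Sym2 V)))) := by
    rw [hB₁span]
    exact Submodule.subset_span (subset_convexHull ℝ _ ⟨_, hP1, rfl⟩)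
  have hv2 : indVec (partX X M) ∈
      Submodule.span ℝ (indVec '' (B₂ : Set (Finset (Sym2 V)))) := by
    rw [hB₂span]
    exact Submodule.subset_span (subset_convexHull ℝ _ ⟨_, hP2, rfl⟩)
  obtain ⟨c, hc⟩ := exists_coeffs_real hv1
  obtain ⟨d, hd⟩ := exists_coeffs_real hv2
  rw [indVec_pm_decomp hB₁pm hB₂pm hm₁ hm₂ hM hMC hc hd]
  refine Submodule.add_mem _ (Submodule.add_mem _ ?_ ?_) ?_
  · apply Submodule.sum_mem
    intro A hA
    apply Submodule.smul_mem
    have hcE := cE_mem (G := G) (X := X) (contr_cutcard₁ (hB₁pm A hA))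
    exact Submodule.sub_mem _
      (Submodule.subset_span (Set.mem_image_of_mem _ (Finset.mem_coe.mpr
        (unionm₂_mem_merger hB₁pm hB₂pm hm₁ hm₂ hA hcE.2 hcE.1))))
      (Submodule.subset_span (Set.mem_image_of_mem _ (Finset.mem_coe.mpr
        (m₁m₂_mem_merger hB₁pm hB₂pm hm₁ hm₂ hcE.2))))
  · apply Submodule.sum_mem
    intro N hN
    apply Submodule.smul_mem
    have hcE := cE_mem (G := G) (X := X) ((hB₂pm N hN).2.2.1)
    exact Submodule.sub_mem _
      (Submodule.subset_span (Set.mem_image_of_mem _ (Finset.mem_coe.mpr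
        (m₁union_mem_merger hB₁pm hB₂pm hm₁ hm₂ hN hcE.2 hcE.1))))
      (Submodule.subset_span (Set.mem_image_of_mem _ (Finset.mem_coe.mpr
        (m₁m₂_mem_merger hB₁pm hB₂pm hm₁ hm₂ hcE.2))))
  · exact Submodule.subset_span (Set.mem_image_of_mem _ (Finset.mem_coe.mpr
      (m₁m₂_mem_merger hB₁pm hB₂pm hm₁ hm₂ heC)))

lemma pm_mem_span_merger_int {M : Finset (Sym2 V)} {e : Sym2 V} (hM : IsPM G M)
    (hMC : M ∩ cutE G X = {e})
    (hz1 : indVec (partX Xᶜ M) ∈ Submodule.span ℤ (indVec '' (B₁ : Set (Finset (Sym2 V)))))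
    (hz2 : indVec (partX X M) ∈ Submodule.span ℤ (indVec '' (B₂ : Set (Finset (Sym2 V))))) :
    indVec M ∈ Submodule.span ℤ
      (indVec '' ((merger B₁ B₂ m₁ m₂ (cutE G X)) : Set (Finset (Sym2 V)))) := by
  have heMC : e ∈ M ∩ cutE G X := by rw [hMC]; exact Finset.mem_singleton_self e
  have heC : e ∈ cutE G X := (Finset.mem_inter.mp heMC).2
  obtain ⟨c, hc⟩ := exists_coeffs_int hz1
  obtain ⟨d, hd⟩ := exists_coeffs_int hz2
  rw [indVec_pm_decomp hB₁pm hB₂pm hm₁ hm₂ hM hMC hc hd]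
  refine Submodule.add_mem _ (Submodule.add_mem _ ?_ ?_) ?_
  · apply Submodule.sum_mem
    intro A hA
    rw [Int.cast_smul_eq_zsmul]
    apply Submodule.smul_mem
    have hcE := cE_mem (G := G) (X := X) (contr_cutcard₁ (hB₁pm A hA))
    exact Submodule.sub_mem _
      (Submodule.subset_span (Set.mem_image_of_mem _ (Finset.mem_coe.mpr
        (unionm₂_mem_merger hB₁pm hB₂pm hm₁ hm₂ hA hcE.2 hcE.1))))
      (Submodule.subset_span (Set.mem_image_of_mem _ (Finset.mem_coe.mpr
        (m₁m₂_mem_merger hB₁pm hB₂pm hm₁ hm₂ hcE.2))))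
  · apply Submodule.sum_mem
    intro N hN
    rw [Int.cast_smul_eq_zsmul]
    apply Submodule.smul_mem
    have hcE := cE_mem (G := G) (X := X) ((hB₂pm N hN).2.2.1)
    exact Submodule.sub_mem _
      (Submodule.subset_span (Set.mem_image_of_mem _ (Finset.mem_coe.mpr
        (m₁union_mem_merger hB₁pm hB₂pm hm₁ hm₂ hN hcE.2 hcE.1))))
      (Submodule.subset_span (Set.mem_image_of_mem _ (Finset.mem_coe.mpr
        (m₁m₂_mem_merger hB₁pm hB₂pm hm₁ hm₂ hcE.2))))
  · exact Submodule.subset_span (Set.mem_image_of_mem _ (Finset.mem_coe.mpr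
      (m₁m₂_mem_merger hB₁pm hB₂pm hm₁ hm₂ heC)))

lemma fiber_typeII_eq {M₀ : Finset (Sym2 V)} (hM₀ : M₀ ∈ merger B₁ B₂ m₁ m₂ (cutE G X))
    (hT : TypeII G X m₁ M₀) :
    (merger B₁ B₂ m₁ m₂ (cutE G X)).filter (fun M => partX Xᶜ M = partX Xᶜ M₀) = {M₀} := by
  ext M
  rw [Finset.mem_filter, Finset.mem_singleton]
  constructor
  · rintro ⟨hM, hp⟩
    exact merger_fiber_typeII hB₁pm hB₂pm hm₁ hm₂ hM hM₀ hT hp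
  · rintro rfl
    exact ⟨hM₀, rfl⟩

lemma merger_maps₁ : ∀ M ∈ merger B₁ B₂ m₁ m₂ (cutE G X), partX Xᶜ M ∈ B₁ := by
  intro M hM
  obtain ⟨e, -, -, -, -, -, -, -, hB1, -, -, -⟩ := merger_struct hB₁pm hB₂pm hm₁ hm₂ hM
  exact hB1

lemma merger_maps₂ : ∀ M ∈ merger B₁ B₂ m₁ m₂ (cutE G X), partX X M ∈ B₂ := by
  intro M hM
  obtain ⟨e, -, -, -, -, -, -, -, -, hB2, -, -⟩ := merger_struct hB₁pm hB₂pm hm₁ hm₂ hM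
  exact hB2

lemma merger_coeff_vanish
    (hB₁li : LinearIndependent ℝ (fun M : B₁ => indVec M.1))
    (hB₂li : LinearIndependent ℝ (fun M : B₂ => indVec M.1))
    {Gc : Finset (Sym2 V) → ℝ}
    (hsum : ∑ M ∈ merger B₁ B₂ m₁ m₂ (cutE G X), Gc M • indVec M = 0) :
    ∀ M ∈ merger B₁ B₂ m₁ m₂ (cutE G X), Gc M = 0 := by
  set Mg := merger B₁ B₂ m₁ m₂ (cutE G X) with hMgdef
  have hreg1 := merger_regroup (S := Mg) (Y := Xᶜ) Gc (merger_maps₁ hB₁pm hB₂pm hm₁ hm₂)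
  rw [hsum, map_zero] at hreg1
  have hco1 := li_coeffs hB₁li hreg1.symm
  have hstep1 : ∀ M₀ ∈ Mg, TypeII G X m₁ M₀ → Gc M₀ = 0 := by
    intro M₀ hM₀ hT
    have h := hco1 (partX Xᶜ M₀) (merger_maps₁ hB₁pm hB₂pm hm₁ hm₂ M₀ hM₀)
    rw [fiber_typeII_eq hB₁pm hB₂pm hm₁ hm₂ hM₀ hT, Finset.sum_singleton] at h
    exact h
  have hreg2 := merger_regroup (S := Mg) (Y := X) Gc (merger_maps₂ hB₁pm hB₂pm hm₁ hm₂)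
  rw [hsum, map_zero] at hreg2
  have hco2 := li_coeffs hB₂li hreg2.symm
  intro M₀ hM₀
  by_cases hT : TypeII G X m₁ M₀
  · exact hstep1 M₀ hM₀ hT
  · have h := hco2 (partX X M₀) (merger_maps₂ hB₁pm hB₂pm hm₁ hm₂ M₀ hM₀)
    have hsingle := Finset.sum_eq_single_of_mem
      (s := Mg.filter (fun M => partX X M = partX X M₀)) (f := Gc) M₀
      (Finset.mem_filter.mpr ⟨hM₀, rfl⟩) (fun M hMf hne => by
        obtain ⟨hM, hp⟩ := Finset.mem_filter.mp hMf
        rcases merger_fiber_typeI hB₁pm hB₂pm hm₁ hm₂ hM hM₀ hT hp with h' | h'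
        · exact absurd h' hne
        · exact hstep1 M hM h')
    rw [hsingle] at h
    exact h

lemma merger_li
    (hB₁li : LinearIndependent ℝ (fun M : B₁ => indVec M.1))
    (hB₂li : LinearIndependent ℝ (fun M : B₂ => indVec M.1)) :
    LinearIndependent ℝ (fun M : (merger B₁ B₂ m₁ m₂ (cutE G X)) => indVec M.1) := by
  rw [Fintype.linearIndependent_iff]
  intro g hg
  have hGcval : ∀ (i : merger B₁ B₂ m₁ m₂ (cutE G X)),
      (fun M => if h : M ∈ merger B₁ B₂ m₁ m₂ (cutE G X) then g ⟨M, h⟩ else 0) i.1 = g i := by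
    intro i
    simp only
    rw [dif_pos i.2]
  have hsum : ∑ M ∈ merger B₁ B₂ m₁ m₂ (cutE G X),
      (fun M => if h : M ∈ merger B₁ B₂ m₁ m₂ (cutE G X) then g ⟨M, h⟩ else 0) M • indVec M
        = 0 := by
    rw [← Finset.sum_coe_sort (merger B₁ B₂ m₁ m₂ (cutE G X))
      (fun M => (fun M => if h : M ∈ merger B₁ B₂ m₁ m₂ (cutE G X) then g ⟨M, h⟩ else 0) M •
        indVec M), ← hg]
    apply Finset.sum_congr rfl
    intro i _
    rw [hGcval i]
  have := merger_coeff_vanish hB₁pm hB₂pm hm₁ hm₂ hB₁li hB₂li hsum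
  intro i
  rw [← hGcval i]
  exact this i.1 i.2

end Merger

/-- the merger of bases `B₁, B₂` of `lin P(G₁)`, `lin P(G₂)` (made of
perfect matchings of the cut-contractions `G₁ = G/X̄`, `G₂ = G/X`) has size
`|B₁| + |B₂| − |C|`, consists of perfect matchings of `G` meeting `C` once, and is
a basis of `lin P(G;C)`; it inherits integral-basis and lattice-basis properties. -/
theorem stmt18 (G : SimpleGraph V) (hG : MatchingCovered G) (X : Set V)
    (hsep : SeparatingCut G X)
    (B₁ B₂ : Finset (Finset (Sym2 V)))
    (hB₁pm : ∀ M ∈ B₁, IsPMContr G Xᶜ M) (hB₂pm : ∀ M ∈ B₂, IsPMContr G X M)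
    (hB₁li : LinearIndependent ℝ (fun M : B₁ => indVec M.1))
    (hB₂li : LinearIndependent ℝ (fun M : B₂ => indVec M.1))
    (hB₁span : Submodule.span ℝ (indVec '' (B₁ : Set (Finset (Sym2 V)))) =
      Submodule.span ℝ (contrPolytope G Xᶜ))
    (hB₂span : Submodule.span ℝ (indVec '' (B₂ : Set (Finset (Sym2 V)))) =
      Submodule.span ℝ (contrPolytope G X))
    (m₁ m₂ : Sym2 V → Finset (Sym2 V))
    (hm₁ : ∀ e ∈ cutE G X, m₁ e ∈ B₁ ∧ e ∈ m₁ e)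
    (hm₂ : ∀ e ∈ cutE G X, m₂ e ∈ B₂ ∧ e ∈ m₂ e) :
    (merger B₁ B₂ m₁ m₂ (cutE G X)).card = B₁.card + B₂.card - (cutE G X).card ∧
    (∀ M ∈ merger B₁ B₂ m₁ m₂ (cutE G X), IsPM G M ∧ (M ∩ cutE G X).card = 1) ∧
    LinearIndependent ℝ (fun M : (merger B₁ B₂ m₁ m₂ (cutE G X)) => indVec M.1) ∧
    Submodule.span ℝ
        (indVec '' ((merger B₁ B₂ m₁ m₂ (cutE G X)) : Set (Finset (Sym2 V)))) =
      Submodule.span ℝ (faceCut G X) ∧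
    ((∀ z, z ∈ Submodule.span ℝ (indVec '' (B₁ : Set (Finset (Sym2 V)))) →
        Integral z → z ∈ Submodule.span ℤ (indVec '' (B₁ : Set (Finset (Sym2 V))))) →
      (∀ z, z ∈ Submodule.span ℝ (indVec '' (B₂ : Set (Finset (Sym2 V)))) →
        Integral z → z ∈ Submodule.span ℤ (indVec '' (B₂ : Set (Finset (Sym2 V))))) →
      ∀ z, z ∈ Submodule.span ℝ
          (indVec '' ((merger B₁ B₂ m₁ m₂ (cutE G X)) : Set (Finset (Sym2 V)))) →
        Integral z →
        z ∈ Submodule.span ℤ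
          (indVec '' ((merger B₁ B₂ m₁ m₂ (cutE G X)) : Set (Finset (Sym2 V))))) ∧
    (Submodule.span ℤ (indVec '' (B₁ : Set (Finset (Sym2 V)))) =
        Submodule.span ℤ {x | ∃ M, IsPMContr G Xᶜ M ∧ x = indVec M} →
      Submodule.span ℤ (indVec '' (B₂ : Set (Finset (Sym2 V)))) =
        Submodule.span ℤ {x | ∃ M, IsPMContr G X M ∧ x = indVec M} →
      Submodule.span ℤ
          (indVec '' ((merger B₁ B₂ m₁ m₂ (cutE G X)) : Set (Finset (Sym2 V)))) =
        Submodule.span ℤ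
          {x | ∃ M, IsPM G M ∧ (M ∩ cutE G X).card = 1 ∧ x = indVec M}) := by
  have hodd : Odd X.toFinset.card := hsep.1
  have hX1 : 1 < X.toFinset.card := hsep.2.1
  have hV : Nonempty V := by
    obtain ⟨v, -⟩ := Finset.card_pos.mp (by omega : 0 < X.toFinset.card)
    exact ⟨v⟩
  have hmaps1 := merger_maps₁ hB₁pm hB₂pm hm₁ hm₂
  have hmaps2 := merger_maps₂ hB₁pm hB₂pm hm₁ hm₂
  -- conjunct 2 first (used later)
  have hconj2 : ∀ M ∈ merger B₁ B₂ m₁ m₂ (cutE G X),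
      IsPM G M ∧ (M ∩ cutE G X).card = 1 := by
    intro M hM
    obtain ⟨e, -, hpm, hcut, -⟩ := merger_struct hB₁pm hB₂pm hm₁ hm₂ hM
    exact ⟨hpm, by rw [hcut]; exact Finset.card_singleton e⟩
  refine ⟨merger_card hB₁pm hB₂pm hm₁ hm₂, hconj2, merger_li hB₁pm hB₂pm hm₁ hm₂ hB₁li hB₂li,
    ?_, ?_, ?_⟩
  · -- conjunct 4 : span equality with the face
    rw [faceCut_span hodd]
    apply le_antisymm
    · rw [Submodule.span_le]
      rintro x ⟨M, hMmem, rfl⟩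
      have hM := Finset.mem_coe.mp hMmem
      exact SetLike.mem_coe.mpr (Submodule.subset_span
        ⟨M, (hconj2 M hM).1, (hconj2 M hM).2, rfl⟩)
    · rw [Submodule.span_le]
      rintro x ⟨M, hpm, h1, rfl⟩
      obtain ⟨e, hMC⟩ := Finset.card_eq_one.mp h1
      exact SetLike.mem_coe.mpr
        (pm_mem_span_merger_real hB₁pm hB₂pm hm₁ hm₂ hB₁span hB₂span hpm hMC)
  · -- conjunct 5 : integral basis property
    intro H1 H2 z hz hzint
    obtain ⟨γ, hγ⟩ := exists_coeffs_real hz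
    -- side 1
    have hreg1 := merger_regroup (S := merger B₁ B₂ m₁ m₂ (cutE G X)) (Y := Xᶜ) γ hmaps1
    rw [← hγ] at hreg1
    have hp1mem : projL Xᶜ z ∈ Submodule.span ℝ (indVec '' (B₁ : Set (Finset (Sym2 V)))) := by
      rw [hreg1]
      exact Submodule.sum_mem _ (fun A hA => Submodule.smul_mem _ _
        (Submodule.subset_span (Set.mem_image_of_mem _ (Finset.mem_coe.mpr hA))))
    obtain ⟨n1, hn1⟩ := exists_coeffs_int (H1 _ hp1mem (projL_integral hzint))
    have huniq1 : ∀ A ∈ B₁,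
        (∑ M ∈ (merger B₁ B₂ m₁ m₂ (cutE G X)).filter (fun M => partX Xᶜ M = A), γ M) =
          (n1 A : ℝ) := by
      have hzero : ∑ A ∈ B₁,
          ((∑ M ∈ (merger B₁ B₂ m₁ m₂ (cutE G X)).filter (fun M => partX Xᶜ M = A), γ M) -
            (n1 A : ℝ)) • indVec A = 0 := by
        have hsplit : ∀ A ∈ B₁,
            ((∑ M ∈ (merger B₁ B₂ m₁ m₂ (cutE G X)).filter (fun M => partX Xᶜ M = A), γ M) -
              (n1 A : ℝ)) • indVec A =
            (∑ M ∈ (merger B₁ B₂ m₁ m₂ (cutE G X)).filter (fun M => partX Xᶜ M = A), γ M) •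
              indVec A - (n1 A : ℝ) • indVec A := fun A _ => sub_smul _ _ _
        rw [Finset.sum_congr rfl hsplit, Finset.sum_sub_distrib, ← hreg1, ← hn1, sub_self]
      have := li_coeffs hB₁li hzero
      intro A hA
      have h := this A hA
      linarith
    have hTII : ∀ M ∈ merger B₁ B₂ m₁ m₂ (cutE G X), TypeII G X m₁ M →
        ∃ k : ℤ, γ M = (k : ℝ) := by
      intro M hM hT
      refine ⟨n1 (partX Xᶜ M), ?_⟩
      have h := huniq1 _ (hmaps1 M hM)
      rw [fiber_typeII_eq hB₁pm hB₂pm hm₁ hm₂ hM hT, Finset.sum_singleton] at h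
      exact h
    -- side 2
    have hreg2 := merger_regroup (S := merger B₁ B₂ m₁ m₂ (cutE G X)) (Y := X) γ hmaps2
    rw [← hγ] at hreg2
    have hp2mem : projL X z ∈ Submodule.span ℝ (indVec '' (B₂ : Set (Finset (Sym2 V)))) := by
      rw [hreg2]
      exact Submodule.sum_mem _ (fun A hA => Submodule.smul_mem _ _
        (Submodule.subset_span (Set.mem_image_of_mem _ (Finset.mem_coe.mpr hA))))
    obtain ⟨n2, hn2⟩ := exists_coeffs_int (H2 _ hp2mem (projL_integral hzint))
    have huniq2 : ∀ A ∈ B₂,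
        (∑ M ∈ (merger B₁ B₂ m₁ m₂ (cutE G X)).filter (fun M => partX X M = A), γ M) =
          (n2 A : ℝ) := by
      have hzero : ∑ A ∈ B₂,
          ((∑ M ∈ (merger B₁ B₂ m₁ m₂ (cutE G X)).filter (fun M => partX X M = A), γ M) -
            (n2 A : ℝ)) • indVec A = 0 := by
        have hsplit : ∀ A ∈ B₂,
            ((∑ M ∈ (merger B₁ B₂ m₁ m₂ (cutE G X)).filter (fun M => partX X M = A), γ M) -
              (n2 A : ℝ)) • indVec A =
            (∑ M ∈ (merger B₁ B₂ m₁ m₂ (cutE G X)).filter (fun M => partX X M = A), γ M) •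
              indVec A - (n2 A : ℝ) • indVec A := fun A _ => sub_smul _ _ _
        rw [Finset.sum_congr rfl hsplit, Finset.sum_sub_distrib, ← hreg2, ← hn2, sub_self]
      have := li_coeffs hB₂li hzero
      intro A hA
      have h := this A hA
      linarith
    -- integral choice function
    have hAll : ∀ M ∈ merger B₁ B₂ m₁ m₂ (cutE G X), ∃ k : ℤ, γ M = (k : ℝ) := by
      have hFval : ∀ M : Finset (Sym2 V), (∃ k : ℤ, γ M = (k : ℝ)) →
          γ M = (((fun M => if h : ∃ k : ℤ, γ M = (k : ℝ) then h.choose else 0) M : ℤ) : ℝ) := by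
        intro M h
        simp only
        rw [dif_pos h]
        exact h.choose_spec
      intro M₀ hM₀
      by_cases hT : TypeII G X m₁ M₀
      · exact hTII M₀ hM₀ hT
      · have hM₀fib : M₀ ∈ (merger B₁ B₂ m₁ m₂ (cutE G X)).filter
            (fun M => partX X M = partX X M₀) := Finset.mem_filter.mpr ⟨hM₀, rfl⟩
        have hfib := huniq2 _ (hmaps2 M₀ hM₀)
        have h1 : γ M₀ + ∑ M ∈ ((merger B₁ B₂ m₁ m₂ (cutE G X)).filter
            (fun M => partX X M = partX X M₀)).erase M₀, γ M = (n2 (partX X M₀) : ℝ) := by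
          rw [Finset.add_sum_erase _ γ hM₀fib]
          exact hfib
        have herase : ∀ M ∈ ((merger B₁ B₂ m₁ m₂ (cutE G X)).filter
            (fun M => partX X M = partX X M₀)).erase M₀, ∃ k : ℤ, γ M = (k : ℝ) := by
          intro M hMe
          obtain ⟨hne, hMf⟩ := Finset.mem_erase.mp hMe
          obtain ⟨hMmg, hp⟩ := Finset.mem_filter.mp hMf
          rcases merger_fiber_typeI hB₁pm hB₂pm hm₁ hm₂ hMmg hM₀ hT hp with h' | h'
          · exact absurd h' hne
          · exact hTII M hMmg h'
        refine ⟨n2 (partX X M₀) - ∑ M ∈ ((merger B₁ B₂ m₁ m₂ (cutE G X)).filter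
            (fun M => partX X M = partX X M₀)).erase M₀,
          (fun M => if h : ∃ k : ℤ, γ M = (k : ℝ) then h.choose else 0) M, ?_⟩
        have h2 : ∑ M ∈ ((merger B₁ B₂ m₁ m₂ (cutE G X)).filter
            (fun M => partX X M = partX X M₀)).erase M₀, γ M =
            ∑ M ∈ ((merger B₁ B₂ m₁ m₂ (cutE G X)).filter
            (fun M => partX X M = partX X M₀)).erase M₀,
            (((fun M => if h : ∃ k : ℤ, γ M = (k : ℝ) then h.choose else 0) M : ℤ) : ℝ) :=
          Finset.sum_congr rfl (fun M hMe => hFval M (herase M hMe))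
        push_cast
        linarith [h1, h2]
    rw [hγ]
    apply Submodule.sum_mem
    intro M hM
    obtain ⟨k, hk⟩ := hAll M hM
    rw [hk, Int.cast_smul_eq_zsmul]
    exact Submodule.smul_mem _ _
      (Submodule.subset_span (Set.mem_image_of_mem _ (Finset.mem_coe.mpr hM)))
  · -- conjunct 6 : lattice basis property
    intro hL1 hL2
    apply le_antisymm
    · rw [Submodule.span_le]
      rintro x ⟨M, hMmem, rfl⟩
      have hM := Finset.mem_coe.mp hMmem
      exact SetLike.mem_coe.mpr (Submodule.subset_span
        ⟨M, (hconj2 M hM).1, (hconj2 M hM).2, rfl⟩)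
    · rw [Submodule.span_le]
      rintro x ⟨M, hpm, h1, rfl⟩
      obtain ⟨e, hMC⟩ := Finset.card_eq_one.mp h1
      obtain ⟨hP1, hP2, -, -, -⟩ := decomp_pm hpm hMC
      have hz1 : indVec (partX Xᶜ M) ∈
          Submodule.span ℤ (indVec '' (B₁ : Set (Finset (Sym2 V)))) := by
        rw [hL1]
        exact Submodule.subset_span ⟨_, hP1, rfl⟩
      have hz2 : indVec (partX X M) ∈
          Submodule.span ℤ (indVec '' (B₂ : Set (Finset (Sym2 V)))) := by
        rw [hL2]
        exact Submodule.subset_span ⟨_, hP2, rfl⟩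
      exact SetLike.mem_coe.mpr
        (pm_mem_span_merger_int hB₁pm hB₂pm hm₁ hm₂ hpm hMC hz1 hz2)


end PaperPM
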